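/- Under the stated hypotheses, for the parallel hybrid algorithm, every u ∈ F and every n ≥ 0 satisfy ‖u - ȳ_n‖ ≤ ‖u - z̄_n‖ ≤ ‖u - x_n‖. -/

import Mathlib

open Filter Topology
open scoped RealInnerProductSpace


lemma sq_le_norm_le {H : Type*} [NormedAddCommGroup H] {a b : H}
    (h : ‖a‖ ^ 2 ≤ ‖b‖ ^ 2) : ‖a‖ ≤ ‖b‖ := by
  nlinarith [norm_nonneg a, norm_nonneg b]

lemma proj_vi' {H : Type*} [NormedAddCommGroup H] [InnerProductSpace ℝ H]
    {D : Set H} (hD : Convex ℝ D) {x p : H}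
    (hp : p ∈ D) (hmin : ∀ w ∈ D, ‖p - x‖ ≤ ‖w - x‖) :
    ∀ w ∈ D, ⟪x - p, w - p⟫ ≤ 0 := by
  haveI : Nonempty D := ⟨⟨p, hp⟩⟩
  have heq : ‖x - p‖ = ⨅ w : D, ‖x - w‖ := by
    refine le_antisymm (le_ciInf fun w => ?_)
      (ciInf_le (f := fun w : D => ‖x - (w : H)‖) ⟨0, fun b ⟨w, hw⟩ => hw ▸ norm_nonneg _⟩ ⟨p, hp⟩)
    rw [norm_sub_rev, norm_sub_rev x]
    exact hmin w w.2
  exact (norm_eq_iInf_iff_real_inner_le_zero hD hp).mp heq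

lemma proj_nonexp {H : Type*} [NormedAddCommGroup H] [InnerProductSpace ℝ H]
    {D : Set H} {x y p q : H} (hp : p ∈ D) (hq : q ∈ D)
    (hvp : ∀ w ∈ D, ⟪x - p, w - p⟫ ≤ 0) (hvq : ∀ w ∈ D, ⟪y - q, w - q⟫ ≤ 0) :
    ‖p - q‖ ≤ ‖x - y‖ := by
  have h1 := hvp q hq
  have h2 := hvq p hp
  have key : ‖p - q‖ ^ 2 ≤ ⟪x - y, p - q⟫ := by
    have e : ⟪x - y, p - q⟫ - ‖p - q‖ ^ 2
        = -⟪x - p, q - p⟫ - ⟪y - q, p - q⟫ := by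
      rw [← real_inner_self_eq_norm_sq]
      simp only [inner_sub_left, inner_sub_right]
      ring
    nlinarith [e]
  have := real_inner_le_norm (x - y) (p - q)
  have := norm_nonneg (p - q)
  rcases eq_or_lt_of_le (norm_nonneg (p - q)) with h | h
  · rw [← h]; exact norm_nonneg _
  · nlinarith

/-- `p` is the metric projection of `x` onto the set `D`:
it belongs to `D` and minimizes the distance to `x` over `D`. -/
def IsMetricProj {H : Type*} [NormedAddCommGroup H] [InnerProductSpace ℝ H]
    (D : Set H) (x p : H) : Prop :=
  p ∈ D ∧ ∀ w ∈ D, ‖p - x‖ ≤ ‖w - x‖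

theorem fejer_monotonicity_estimate
    {H : Type*} [NormedAddCommGroup H] [InnerProductSpace ℝ H] [CompleteSpace H]
    -- `C` is a nonempty closed convex subset of `H`
    (C : Set H) (hCne : C.Nonempty) (hCcl : IsClosed C) (hCcv : Convex ℝ C)
    (K M N : ℕ)
    -- the bifunctions `f_l : C × C → ℝ` satisfy conditions (A1)-(A4)
    (f : Fin K → H → H → ℝ)
    (hfA1 : ∀ l, ∀ p ∈ C, f l p p = 0)
    (hfA2 : ∀ l, ∀ p ∈ C, ∀ q ∈ C, f l p q + f l q p ≤ 0)
    (hfA3 : ∀ l, ∀ p ∈ C, ∀ q ∈ C, ∀ w ∈ C,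
      Filter.limsup (fun t : ℝ => f l (t • w + (1 - t) • p) q)
        (nhdsWithin 0 (Set.Ioi 0)) ≤ f l p q)
    (hfA4cv : ∀ l, ∀ p ∈ C, ConvexOn ℝ C (f l p))
    (hfA4lsc : ∀ l, ∀ p ∈ C, LowerSemicontinuousOn (f l p) C)
    -- the mappings `A_k : C → H` are `α`-inverse strongly monotone
    (α : ℝ) (hα : 0 < α) (A : Fin M → H → H)
    (hA : ∀ k, ∀ p ∈ C, ∀ q ∈ C, α * ‖A k p - A k q‖ ^ 2 ≤ ⟪A k p - A k q, p - q⟫)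
    -- the mappings `S_i : C → C` are nonexpansive
    (S : Fin N → H → H) (hSmap : ∀ i, ∀ p ∈ C, S i p ∈ C)
    (hS : ∀ i, ∀ p ∈ C, ∀ q ∈ C, ‖S i p - S i q‖ ≤ ‖p - q‖)
    -- parameters: `λ ∈ (0, 2α)`, `{α_n} ⊂ [0,1]`, `{r_n} ⊂ [d, ∞)`, `d > 0`
    (lam : ℝ) (hlam : lam ∈ Set.Ioo 0 (2 * α))
    (a : ℕ → ℝ) (ha : ∀ n, a n ∈ Set.Icc (0 : ℝ) 1)
    (d : ℝ) (hd : 0 < d) (r : ℕ → ℝ) (hr : ∀ n, d ≤ r n)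
    -- `F = (∩ EP(f_l)) ∩ (∩ F(S_i)) ∩ (∩ VI(A_k, C))` is nonempty
    (F : Set H)
    (hF : F = {p | p ∈ C ∧ (∀ l, ∀ q ∈ C, 0 ≤ f l p q) ∧ (∀ i, S i p = p) ∧
      (∀ k, ∀ q ∈ C, 0 ≤ ⟪A k p, q - p⟫)})
    (hFne : F.Nonempty)
    -- the parallel hybrid algorithm
    (x : ℕ → H) (z : ℕ → Fin K → H) (uu : ℕ → Fin M → H) (y : ℕ → Fin N → H)
    (ln : ℕ → Fin K) (kn : ℕ → Fin M) (inn : ℕ → Fin N)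
    (Cn Qn : ℕ → Set H)
    -- `z_n^l` solves the regularized equilibrium problem for `f_l` at `x_n`
    (hz : ∀ n l, z n l ∈ C ∧
      ∀ q ∈ C, 0 ≤ f l (z n l) q + (1 / r n) * ⟪q - z n l, z n l - x n⟫)
    -- `l_n` attains `max{‖z_n^l - x_n‖}`, `z̄_n = z_n^{l_n}`
    (hln : ∀ n l, ‖z n l - x n‖ ≤ ‖z n (ln n) - x n‖)
    -- `u_n^k = P_C(z̄_n - λ A_k z̄_n)`
    (hu : ∀ n k, IsMetricProj C (z n (ln n) - lam • A k (z n (ln n))) (uu n k))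
    -- `k_n` attains `max{‖u_n^k - x_n‖}`, `ū_n = u_n^{k_n}`
    (hkn : ∀ n k, ‖uu n k - x n‖ ≤ ‖uu n (kn n) - x n‖)
    -- `y_n^i = α_n ū_n + (1 - α_n) S_i ū_n`
    (hy : ∀ n i, y n i = a n • uu n (kn n) + (1 - a n) • S i (uu n (kn n)))
    -- `i_n` attains `max{‖y_n^i - x_n‖}`, `ȳ_n = y_n^{i_n}`
    (hin : ∀ n i, ‖y n i - x n‖ ≤ ‖y n (inn n) - x n‖)
    -- `C_n = {v : ‖v - ȳ_n‖ ≤ ‖v - z̄_n‖ ≤ ‖v - x_n‖}`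
    (hCn : ∀ n, Cn n = {v | ‖v - y n (inn n)‖ ≤ ‖v - z n (ln n)‖ ∧
      ‖v - z n (ln n)‖ ≤ ‖v - x n‖})
    -- `Q_n = {v : ⟨x_0 - x_n, x_n - v⟩ ≥ 0}`
    (hQn : ∀ n, Qn n = {v | 0 ≤ ⟪x 0 - x n, x n - v⟫})
    -- `x_{n+1} = P_{C_n ∩ Q_n} x_0`
    (hx : ∀ n, IsMetricProj (Cn n ∩ Qn n) (x 0) (x (n + 1)))
    :
    ∀ u ∈ F, ∀ n, ‖u - y n (inn n)‖ ≤ ‖u - z n (ln n)‖ ∧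
      ‖u - z n (ln n)‖ ≤ ‖u - x n‖ := by

  intro u huF n
  rw [hF] at huF
  obtain ⟨huC, huEP, huFS, huVI⟩ := huF
  have hzbC : z n (ln n) ∈ C := (hz n (ln n)).1
  -- Step 1: ‖u - z_n^l‖ ≤ ‖u - x_n‖ for every l
  have step1 : ∀ l, ‖u - z n l‖ ≤ ‖u - x n‖ := by
    intro l
    have hzC := (hz n l).1
    have h1 := (hz n l).2 u huC
    have h2 := huEP l (z n l) hzC
    have h3 := hfA2 l (z n l) hzC u huC
    have hrpos : (0:ℝ) < r n := lt_of_lt_of_le hd (hr n)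
    have hrinv : (0:ℝ) < 1 / r n := by positivity
    have hip : 0 ≤ ⟪u - z n l, z n l - x n⟫ := by
      have hmul : 0 ≤ (1 / r n) * ⟪u - z n l, z n l - x n⟫ := by linarith
      nlinarith [hmul, hrinv]
    have e : u - x n = (u - z n l) + (z n l - x n) := by abel
    have hsq : ‖u - z n l‖ ^ 2 ≤ ‖u - x n‖ ^ 2 := by
      rw [e, norm_add_sq_real]
      nlinarith [sq_nonneg ‖z n l - x n‖]
    exact sq_le_norm_le hsq
  -- Step 2: ‖u - u_n^k‖ ≤ ‖u - z̄_n‖ for every k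
  have step2 : ∀ k, ‖u - uu n k‖ ≤ ‖u - z n (ln n)‖ := by
    intro k
    have hukC : uu n k ∈ C := (hu n k).1
    have hvi_u : ∀ w ∈ C, ⟪(u - lam • A k u) - u, w - u⟫ ≤ 0 := by
      intro w hw
      have hv := huVI k w hw
      have e : (u - lam • A k u) - u = -(lam • A k u) := by abel
      rw [e, inner_neg_left, real_inner_smul_left]
      have : (0:ℝ) ≤ lam * ⟪A k u, w - u⟫ := mul_nonneg (le_of_lt hlam.1) hv
      linarith
    have hvi_p := proj_vi' hCcv hukC ((hu n k).2)
    have hne := proj_nonexp huC hukC hvi_u hvi_p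
    have e2 : (u - lam • A k u) - (z n (ln n) - lam • A k (z n (ln n)))
        = (u - z n (ln n)) - lam • (A k u - A k (z n (ln n))) := by
      rw [smul_sub]; abel
    have hAk := hA k u huC (z n (ln n)) hzbC
    have hsq : ‖(u - z n (ln n)) - lam • (A k u - A k (z n (ln n)))‖ ^ 2
        ≤ ‖u - z n (ln n)‖ ^ 2 := by
      rw [norm_sub_sq_real, inner_smul_right, norm_smul, Real.norm_eq_abs, mul_pow, sq_abs,
        real_inner_comm]
      nlinarith [hlam.1, hlam.2, hAk, sq_nonneg ‖A k u - A k (z n (ln n))‖,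
        mul_nonneg (le_of_lt hlam.1) (sub_nonneg.mpr hAk),
        mul_nonneg (mul_nonneg (le_of_lt hlam.1)
          (by linarith [hlam.1, hlam.2] : (0:ℝ) ≤ 2 * α - lam))
          (sq_nonneg ‖A k u - A k (z n (ln n))‖)]
    calc ‖u - uu n k‖ ≤ ‖(u - lam • A k u) - (z n (ln n) - lam • A k (z n (ln n)))‖ := hne
      _ ≤ ‖u - z n (ln n)‖ := by rw [e2]; exact sq_le_norm_le hsq
  -- Step 3: ‖u - y_n^i‖ ≤ ‖u - ū_n‖ for every i
  have hubC : uu n (kn n) ∈ C := (hu n (kn n)).1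
  have step3 : ∀ i, ‖u - y n i‖ ≤ ‖u - uu n (kn n)‖ := by
    intro i
    have ha0 := (ha n).1
    have ha1 := (ha n).2
    have e : u - y n i
        = a n • (u - uu n (kn n)) + (1 - a n) • (u - S i (uu n (kn n))) := by
      rw [hy n i, smul_sub, smul_sub]
      have : a n • u + (1 - a n) • u = u := by
        rw [← add_smul]; simp
      rw [sub_add_eq_sub_sub]
      rw [show a n • u - a n • uu n (kn n) + ((1 - a n) • u - (1 - a n) • S i (uu n (kn n)))
        = (a n • u + (1 - a n) • u) - a n • uu n (kn n) - (1 - a n) • S i (uu n (kn n)) by abel,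
        this]
      try abel
    have hSi : ‖u - S i (uu n (kn n))‖ ≤ ‖u - uu n (kn n)‖ := by
      have := hS i u huC (uu n (kn n)) hubC
      rwa [huFS i] at this
    calc ‖u - y n i‖ = ‖a n • (u - uu n (kn n)) + (1 - a n) • (u - S i (uu n (kn n)))‖ := by
          rw [e]
      _ ≤ ‖a n • (u - uu n (kn n))‖ + ‖(1 - a n) • (u - S i (uu n (kn n)))‖ := norm_add_le _ _
      _ = a n * ‖u - uu n (kn n)‖ + (1 - a n) * ‖u - S i (uu n (kn n))‖ := by
          rw [norm_smul, norm_smul, Real.norm_eq_abs, Real.norm_eq_abs,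
            abs_of_nonneg ha0, abs_of_nonneg (by linarith : (0:ℝ) ≤ 1 - a n)]
      _ ≤ a n * ‖u - uu n (kn n)‖ + (1 - a n) * ‖u - uu n (kn n)‖ := by
          exact add_le_add le_rfl (mul_le_mul_of_nonneg_left hSi (by linarith))
      _ = ‖u - uu n (kn n)‖ := by ring
  exact ⟨le_trans (step3 (inn n)) (step2 (kn n)), step1 (ln n)⟩
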